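/- In a two-player zero-sum quantitative reachability (coalitional) game between a minimizer Min with target set F and a maximizer Max on a finite arena, the game is determined: for every vertex v, inf over Min strategies of sup over Max strategies of the first hitting time of F from v equals sup over Max strategies of inf over Min strategies of the same quantity. -/

import Mathlib

open scoped Classical

structure Arena (V : Type) where
  E : V → V → Prop
  succ : ∀ v, ∃ w, E v w

variable {V P : Type}

/-- An infinite play: consecutive vertices are connected by edges. -/
def IsPlay (A : Arena V) (ρ : ℕ → V) : Prop := ∀ k, A.E (ρ k) (ρ (k + 1))

/-- Cost: least index of a visit to `F`, or `⊤` if never visited. -/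
noncomputable def cost (F : Set V) (ρ : ℕ → V) : ℕ∞ :=
  ⨅ (k : ℕ) (_ : ρ k ∈ F), (k : ℕ∞)

/-- Qualitative gain: `1` if the play visits `F`, else `0`. -/
noncomputable def gain (F : Set V) (ρ : ℕ → V) : ℕ :=
  if ∃ n, ρ n ∈ F then 1 else 0

/-- The set of players whose target set is visited along the play. -/
def visit (F : P → Set V) (ρ : ℕ → V) : Set P := {i | ∃ n, ρ n ∈ F i}

/-- The set of players whose target set is visited within the prefix `ρ₀…ρₖ`. -/
def visitPrefix (F : P → Set V) (ρ : ℕ → V) (k : ℕ) : Set P := {i | ∃ n ≤ k, ρ n ∈ F i}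

/-- A multiplayer reachability game: an arena, an owner for each vertex,
and a target set for each player. -/
structure Game (P V : Type) extends Arena V where
  owner : V → P
  F : P → Set V

/-- A strategy maps (past history, current vertex) to the next vertex. -/
abbrev Strat (V : Type) := List V → V → V

def IsStrategy (A : Arena V) (s : Strat V) : Prop := ∀ p v, A.E v (s p v)

noncomputable def histStep (G : Game P V) (σ : P → Strat V) :
    List V × V → List V × V :=
  fun x => (x.1 ++ [x.2], σ (G.owner x.2) x.1 x.2)

/-- The unique play from `v0` consistent with the strategy profile `σ`. -/
noncomputable def outcome (G : Game P V) (σ : P → Strat V) (v0 : V) (k : ℕ) : V :=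
  ((histStep G σ)^[k] ([], v0)).2

/-- Replace the strategy of player `i` by `s` in the profile `σ`. -/
noncomputable def updProfile (σ : P → Strat V) (i : P) (s : Strat V) : P → Strat V :=
  fun j => if j = i then s else σ j

/-- Nash equilibrium for the quantitative (cost-minimizing) semantics. -/
def IsNE (G : Game P V) (σ : P → Strat V) (v0 : V) : Prop :=
  (∀ i, IsStrategy G.toArena (σ i)) ∧
  ∀ (i : P) (s : Strat V), IsStrategy G.toArena s →
    cost (G.F i) (outcome G σ v0) ≤ cost (G.F i) (outcome G (updProfile σ i s) v0)

/-- Nash equilibrium for the qualitative (gain-maximizing) semantics. -/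
def IsNEqual (G : Game P V) (σ : P → Strat V) (v0 : V) : Prop :=
  (∀ i, IsStrategy G.toArena (σ i)) ∧
  ∀ (i : P) (s : Strat V), IsStrategy G.toArena s →
    gain (G.F i) (outcome G (updProfile σ i s) v0) ≤ gain (G.F i) (outcome G σ v0)

/-- The profile in which player `i` plays `s` and all other players (the
coalition `-i`) jointly play `t`. -/
noncomputable def coalProfile (i : P) (s t : Strat V) : P → Strat V :=
  fun j => if j = i then s else t

/-- Value of the coalitional zero-sum game `G_i` from `v`: player `i`
minimizes the first hitting time of `F i` against the coalition. -/
noncomputable def val (G : Game P V) (i : P) (v : V) : ℕ∞ :=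
  ⨅ s : {s : Strat V // IsStrategy G.toArena s},
    ⨆ t : {t : Strat V // IsStrategy G.toArena t},
      cost (G.F i) (outcome G (coalProfile i s.1 t.1) v)

/-- A positional (memoryless) strategy only depends on the current vertex. -/
def Positional (s : Strat V) : Prop := ∀ p q v, s p v = s q v

/-- An optimal strategy for the minimizer (player `i`) in `G_i`. -/
def OptimalMin (G : Game P V) (i : P) (s : Strat V) : Prop :=
  IsStrategy G.toArena s ∧
  ∀ (v : V) (t : Strat V), IsStrategy G.toArena t →
    cost (G.F i) (outcome G (coalProfile i s t) v) ≤ val G i v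

/-- An optimal strategy for the maximizer (the coalition `-i`) in `G_i`. -/
def OptimalMax (G : Game P V) (i : P) (t : Strat V) : Prop :=
  IsStrategy G.toArena t ∧
  ∀ (v : V) (s : Strat V), IsStrategy G.toArena s →
    val G i v ≤ cost (G.F i) (outcome G (coalProfile i s t) v)

/-- `λ`-consistency of a play. -/
def lambdaConsistent (G : Game P V) (lam : V → ℕ∞) (ρ : ℕ → V) : Prop :=
  ∀ (i : P) (k : ℕ), G.owner (ρ k) = i → (∀ n ≤ k, ρ n ∉ G.F i) →
    cost (G.F i) (fun j => ρ (k + j)) ≤ lam (ρ k)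

/-- A lasso `hℓ^ω` of length `|hℓ| ≤ L`. -/
def IsLasso (ρ : ℕ → V) (L : ℕ) : Prop :=
  ∃ n p, 0 < p ∧ n + p ≤ L ∧ ∀ k, n ≤ k → ρ (k + p) = ρ k

/-- The play obtained by removing the cycle `ρₖ…ρₖ₊ₗ` from `ρ`. -/
def removeCycle (ρ : ℕ → V) (k l : ℕ) : ℕ → V :=
  fun j => if j ≤ k then ρ j else ρ (j + l)

/-- `ρₖ…ρₖ₊ₗ` is an unnecessary cycle: it is a (nontrivial) cycle inside of
which no new player visits his target set. -/
def UnnecessaryCycle (F : P → Set V) (ρ : ℕ → V) (k l : ℕ) : Prop :=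
  0 < l ∧ ρ k = ρ (k + l) ∧ visitPrefix F ρ k = visitPrefix F ρ (k + l)

/-- The set of cost profiles of plays from `v0`. -/
def costProfiles (G : Game P V) (v0 : V) : Set (P → ℕ∞) :=
  {c | ∃ ρ, IsPlay G.toArena ρ ∧ ρ 0 = v0 ∧ c = fun i => cost (G.F i) ρ}

/-- The set of gain profiles of plays from `v0`. -/
def gainProfiles (G : Game P V) (v0 : V) : Set (P → ℕ) :=
  {c | ∃ ρ, IsPlay G.toArena ρ ∧ ρ 0 = v0 ∧ c = fun i => gain (G.F i) ρ}

/-- Pareto optimality for cost profiles: minimal in the componentwise order. -/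
def ParetoMinimal {α : Type} [Preorder α] (S : Set α) (p : α) : Prop :=
  p ∈ S ∧ ∀ q ∈ S, q ≤ p → q = p

/-- Pareto optimality for gain profiles: maximal in the componentwise order. -/
def ParetoMaximal {α : Type} [Preorder α] (S : Set α) (p : α) : Prop :=
  p ∈ S ∧ ∀ q ∈ S, p ≤ q → q = p

/-- `h ++ [v]` is a history from `v0`: a finite path starting at `v0`
whose current (last) vertex is `v`; `h` is the strict past. -/
def IsHist (A : Arena V) (v0 : V) (h : List V) (v : V) : Prop :=
  (h ++ [v]).head? = some v0 ∧ List.Chain' A.E (h ++ [v])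

/-- The strategy `s` shifted by the past history `h` (i.e. `s|h`). -/
noncomputable def shiftStrat (s : Strat V) (h : List V) : Strat V :=
  fun p v => s (h ++ p) v

/-- Gain of a play `ρ` in the subgame after past history `h`:
`1` iff `h·ρ` visits `F`. -/
noncomputable def gainAfter (F : Set V) (h : List V) (ρ : ℕ → V) : ℕ :=
  if (∃ x ∈ h, x ∈ F) ∨ (∃ n, ρ n ∈ F) then 1 else 0

/-- Subgame perfect equilibrium for qualitative reachability games:
in every subgame after a history from `v0`, no player can strictly
increase his gain by a unilateral deviation. -/
def IsSPEqual (G : Game P V) (σ : P → Strat V) (v0 : V) : Prop :=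
  (∀ i, IsStrategy G.toArena (σ i)) ∧
  ∀ (h : List V) (v : V), IsHist G.toArena v0 h v →
    ∀ (i : P) (s : Strat V), IsStrategy G.toArena s →
      gainAfter (G.F i) h
          (outcome G (updProfile (fun j => shiftStrat (σ j) h) i s) v) ≤
        gainAfter (G.F i) h (outcome G (fun j => shiftStrat (σ j) h) v)

namespace Stmt19Aux

variable {V : Type} [Fintype V]

/-- Attractor levels for the minimizer (owner = true). -/
def Attr (A : Arena V) (owner : V → Bool) (F : Set V) : ℕ → Set V
  | 0 => F
  | n + 1 => Attr A owner F n ∪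
      {v | (owner v = true ∧ ∃ w, A.E v w ∧ w ∈ Attr A owner F n) ∨
           (owner v = false ∧ ∀ w, A.E v w → w ∈ Attr A owner F n)}

lemma attr_succ (A : Arena V) (owner : V → Bool) (F : Set V) (n : ℕ) :
    Attr A owner F n ⊆ Attr A owner F (n + 1) := Set.subset_union_left

lemma attr_mono (A : Arena V) (owner : V → Bool) (F : Set V) {m n : ℕ} (h : m ≤ n) :
    Attr A owner F m ⊆ Attr A owner F n := by
  induction h with
  | refl => exact subset_rfl
  | step _ ih => exact ih.trans (attr_succ A owner F _)

lemma F_subset_attr (A : Arena V) (owner : V → Bool) (F : Set V) (n : ℕ) :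
    F ⊆ Attr A owner F n := attr_mono A owner F (Nat.zero_le n)

/-- Rank: least attractor level containing `v`, or `⊤`. -/
noncomputable def rnk (A : Arena V) (owner : V → Bool) (F : Set V) (v : V) : ℕ∞ :=
  ⨅ (n : ℕ) (_ : v ∈ Attr A owner F n), (n : ℕ∞)

lemma rnk_le_iff {A : Arena V} {owner : V → Bool} {F : Set V} {v : V} {n : ℕ} :
    rnk A owner F v ≤ n ↔ v ∈ Attr A owner F n := by
  constructor
  · intro h
    by_contra hv
    have h2 : (n : ℕ∞) + 1 ≤ rnk A owner F v := by
      refine le_iInf fun m => le_iInf fun hm => ?_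
      have : n < m := by
        by_contra hmn
        exact hv (attr_mono A owner F (not_lt.mp hmn) hm)
      exact_mod_cast this
    have hlt : (n : ℕ∞) < (n : ℕ∞) + 1 := by
      rw [← Nat.cast_one, ← Nat.cast_add]
      exact Nat.cast_lt.mpr (Nat.lt_succ_self n)
    exact absurd (h2.trans h) (not_le.mpr hlt)
  · intro h
    exact iInf₂_le n h

lemma exists_min (A : Arena V) (owner : V → Bool) (F : Set V) (v : V) :
    ∃ w, A.E v w ∧ ∀ w', A.E v w' → rnk A owner F w ≤ rnk A owner F w' := by
  obtain ⟨u, hu⟩ := A.succ v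
  obtain ⟨w, hw, hmin⟩ := Finset.exists_min_image
    (Finset.univ.filter fun w => A.E v w) (rnk A owner F) ⟨u, by simp [hu]⟩
  exact ⟨w, by simpa using hw, fun w' hw' => hmin w' (by simp [hw'])⟩

lemma exists_max (A : Arena V) (owner : V → Bool) (F : Set V) (v : V) :
    ∃ w, A.E v w ∧ ∀ w', A.E v w' → rnk A owner F w' ≤ rnk A owner F w := by
  obtain ⟨u, hu⟩ := A.succ v
  obtain ⟨w, hw, hmax⟩ := Finset.exists_max_image
    (Finset.univ.filter fun w => A.E v w) (rnk A owner F) ⟨u, by simp [hu]⟩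
  exact ⟨w, by simpa using hw, fun w' hw' => hmax w' (by simp [hw'])⟩

noncomputable def minchoice (A : Arena V) (owner : V → Bool) (F : Set V) (v : V) : V :=
  (exists_min A owner F v).choose

lemma minchoice_edge (A : Arena V) (owner : V → Bool) (F : Set V) (v : V) :
    A.E v (minchoice A owner F v) := (exists_min A owner F v).choose_spec.1

lemma minchoice_min (A : Arena V) (owner : V → Bool) (F : Set V) {v w : V} (h : A.E v w) :
    rnk A owner F (minchoice A owner F v) ≤ rnk A owner F w :=
  (exists_min A owner F v).choose_spec.2 w h

noncomputable def maxchoice (A : Arena V) (owner : V → Bool) (F : Set V) (v : V) : V :=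
  (exists_max A owner F v).choose

lemma maxchoice_edge (A : Arena V) (owner : V → Bool) (F : Set V) (v : V) :
    A.E v (maxchoice A owner F v) := (exists_max A owner F v).choose_spec.1

lemma maxchoice_max (A : Arena V) (owner : V → Bool) (F : Set V) {v w : V} (h : A.E v w) :
    rnk A owner F w ≤ rnk A owner F (maxchoice A owner F v) :=
  (exists_max A owner F v).choose_spec.2 w h

lemma cost_le_of_mem {F : Set V} {ρ : ℕ → V} {k : ℕ} (h : ρ k ∈ F) :
    cost F ρ ≤ k := iInf₂_le k h

lemma le_cost {F : Set V} {ρ : ℕ → V} {c : ℕ∞} (h : ∀ k, ρ k ∈ F → c ≤ (k : ℕ∞)) :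
    c ≤ cost F ρ := le_iInf fun k => le_iInf fun hk => h k hk

lemma cost_lt_iff {F : Set V} {ρ : ℕ → V} {c : ℕ∞} :
    cost F ρ < c ↔ ∃ k, ρ k ∈ F ∧ (k : ℕ∞) < c := by
  simp [cost, iInf_lt_iff]

lemma cost_shift (F : Set V) (ρ : ℕ → V) :
    cost F ρ ≤ cost F (fun k => ρ (k + 1)) + 1 := by
  rcases eq_or_ne (cost F (fun k => ρ (k + 1))) ⊤ with h | h
  · simp [h]
  · obtain ⟨m, hm⟩ := WithTop.ne_top_iff_exists.mp h
    have hlt : cost F (fun k => ρ (k + 1)) < (m : ℕ∞) + 1 := by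
      rw [← hm, ← Nat.cast_one, ← Nat.cast_add]
      exact Nat.cast_lt.mpr (Nat.lt_succ_self m)
    obtain ⟨k, hk, hklt⟩ := cost_lt_iff.mp hlt
    have hkm : k ≤ m := by exact_mod_cast Nat.lt_succ_iff.mp (by exact_mod_cast hklt)
    calc cost F ρ ≤ ((k + 1 : ℕ) : ℕ∞) := cost_le_of_mem hk
      _ ≤ ((m + 1 : ℕ) : ℕ∞) := by exact_mod_cast Nat.succ_le_succ hkm
      _ = cost F (fun k => ρ (k + 1)) + 1 := by rw [← hm]; push_cast; rfl

lemma min_guarantee (A : Arena V) (owner : V → Bool) (F : Set V) :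
    ∀ (n : ℕ) (ρ : ℕ → V), IsPlay A ρ →
    (∀ k, owner (ρ k) = true → ρ (k + 1) = minchoice A owner F (ρ k)) →
    ρ 0 ∈ Attr A owner F n → cost F ρ ≤ n := by
  intro n
  induction n with
  | zero =>
    intro ρ _ _ h0
    exact cost_le_of_mem (k := 0) h0
  | succ n ih =>
    intro ρ hp hc h0
    by_cases hF : ρ 0 ∈ F
    · exact le_trans (cost_le_of_mem (k := 0) hF) (by simp)
    rcases h0 with h0 | h0
    · exact (ih ρ hp hc h0).trans (by exact_mod_cast Nat.le_succ n)
    · have h1 : ρ 1 ∈ Attr A owner F n := by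
        rcases h0 with ⟨hown, w, hw, hwA⟩ | ⟨hown, hall⟩
        · rw [hc 0 hown]
          exact rnk_le_iff.mp ((minchoice_min A owner F hw).trans (rnk_le_iff.mpr hwA))
        · exact hall _ (hp 0)
      have hrec := ih (fun k => ρ (k + 1)) (fun k => hp (k + 1)) (fun k hk => hc (k + 1) hk) h1
      calc cost F ρ ≤ cost F (fun k => ρ (k + 1)) + 1 := cost_shift F ρ
        _ ≤ (n : ℕ∞) + 1 := add_le_add_left hrec 1
        _ = ((n + 1 : ℕ) : ℕ∞) := by push_cast; rfl

lemma max_guarantee (A : Arena V) (owner : V → Bool) (F : Set V) :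
    ∀ (n : ℕ) (ρ : ℕ → V), IsPlay A ρ →
    (∀ k, owner (ρ k) = false → ρ (k + 1) = maxchoice A owner F (ρ k)) →
    ρ 0 ∉ Attr A owner F n → ∀ k ≤ n, ρ k ∉ F := by
  intro n
  induction n with
  | zero =>
    intro ρ _ _ h0 k hk
    interval_cases k
    exact h0
  | succ n ih =>
    intro ρ hp hc h0 k hk
    have hF : ρ 0 ∉ F := fun h => h0 (F_subset_attr A owner F (n + 1) h)
    match k with
    | 0 => exact hF
    | j + 1 =>
      have h1 : ρ 1 ∉ Attr A owner F n := by
        intro h1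
        apply h0
        rcases Bool.eq_false_or_eq_true (owner (ρ 0)) with hb | hb
        · exact Or.inr (Or.inl ⟨hb, ρ 1, hp 0, h1⟩)
        · refine Or.inr (Or.inr ⟨hb, fun w hw => ?_⟩)
          have hle := maxchoice_max A owner F (v := ρ 0) hw
          rw [← hc 0 hb] at hle
          exact rnk_le_iff.mp (hle.trans (rnk_le_iff.mpr h1))
      exact ih (fun k => ρ (k + 1)) (fun k => hp (k + 1)) (fun k hk => hc (k + 1) hk) h1 j
        (Nat.succ_le_succ_iff.mp hk)

lemma outcome_succ {P : Type} (G : Game P V) (σ : P → Strat V) (v : V) (k : ℕ) :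
    outcome G σ v (k + 1) =
      σ (G.owner (outcome G σ v k)) ((histStep G σ)^[k] ([], v)).1 (outcome G σ v k) := by
  unfold outcome
  rw [Function.iterate_succ_apply']
  rfl

/-- The positional minimizing strategy. -/
noncomputable def minStrat (A : Arena V) (owner : V → Bool) (F : Set V) : Strat V :=
  fun _ w => minchoice A owner F w

lemma minStrat_isStrategy (A : Arena V) (owner : V → Bool) (F : Set V) :
    IsStrategy A (minStrat A owner F) := fun _ w => minchoice_edge A owner F w

/-- The positional maximizing strategy. -/
noncomputable def maxStrat (A : Arena V) (owner : V → Bool) (F : Set V) : Strat V :=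
  fun _ w => maxchoice A owner F w

lemma maxStrat_isStrategy (A : Arena V) (owner : V → Bool) (F : Set V) :
    IsStrategy A (maxStrat A owner F) := fun _ w => maxchoice_edge A owner F w

lemma cost_outcome_le_rnk (A : Arena V) (owner : V → Bool) (F : Set V)
    (σ : Bool → Strat V) (hσt : σ true = minStrat A owner F)
    (hσf : IsStrategy A (σ false)) (v : V) :
    cost F (outcome (Game.mk A owner (fun _ => F)) σ v) ≤ rnk A owner F v := by
  have hstr : ∀ b : Bool, IsStrategy A (σ b) := by
    intro b
    cases b
    · exact hσf
    · rw [hσt]; exact minStrat_isStrategy A owner F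
  have hplay : IsPlay A (outcome (Game.mk A owner (fun _ => F)) σ v) := by
    intro k
    rw [outcome_succ]
    exact hstr _ _ _
  have hcons : ∀ k, owner (outcome (Game.mk A owner (fun _ => F)) σ v k) = true →
      outcome (Game.mk A owner (fun _ => F)) σ v (k + 1) =
        minchoice A owner F (outcome (Game.mk A owner (fun _ => F)) σ v k) := by
    intro k hb
    rw [outcome_succ]
    have hb' : (Game.mk A owner (fun _ => F)).owner
        (outcome (Game.mk A owner (fun _ => F)) σ v k) = true := hb
    rw [hb', hσt]
    rfl
  exact le_iInf fun n => le_iInf fun hn => min_guarantee A owner F n _ hplay hcons hn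

lemma rnk_le_cost_outcome (A : Arena V) (owner : V → Bool) (F : Set V)
    (σ : Bool → Strat V) (hσf : σ false = maxStrat A owner F)
    (hσt : IsStrategy A (σ true)) (v : V) :
    rnk A owner F v ≤ cost F (outcome (Game.mk A owner (fun _ => F)) σ v) := by
  have hstr : ∀ b : Bool, IsStrategy A (σ b) := by
    intro b
    cases b
    · rw [hσf]; exact maxStrat_isStrategy A owner F
    · exact hσt
  have hplay : IsPlay A (outcome (Game.mk A owner (fun _ => F)) σ v) := by
    intro k
    rw [outcome_succ]
    exact hstr _ _ _
  have hcons : ∀ k, owner (outcome (Game.mk A owner (fun _ => F)) σ v k) = false →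
      outcome (Game.mk A owner (fun _ => F)) σ v (k + 1) =
        maxchoice A owner F (outcome (Game.mk A owner (fun _ => F)) σ v k) := by
    intro k hb
    rw [outcome_succ]
    have hb' : (Game.mk A owner (fun _ => F)).owner
        (outcome (Game.mk A owner (fun _ => F)) σ v k) = false := hb
    rw [hb', hσf]
    rfl
  refine le_cost fun k hk => ?_
  by_contra hlt
  have hv : v ∉ Attr A owner F k := fun hmem => hlt (rnk_le_iff.mpr hmem)
  exact max_guarantee A owner F k _ hplay hcons hv k le_rfl hk

end Stmt19Aux

/-- two-player zero-sum quantitative reachability games are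
determined: inf-sup equals sup-inf of the first hitting time of `F`.
Player `Min` owns the vertices with `owner v = true`. -/
theorem stmt19 {V : Type} [Fintype V] (A : Arena V) (owner : V → Bool)
    (F : Set V) (v : V) :
    (⨅ s : {s : Strat V // IsStrategy A s},
      ⨆ t : {t : Strat V // IsStrategy A t},
        cost F (outcome (Game.mk A owner (fun _ => F))
          (fun b => if b then s.1 else t.1) v)) =
    (⨆ t : {t : Strat V // IsStrategy A t},
      ⨅ s : {s : Strat V // IsStrategy A s},
        cost F (outcome (Game.mk A owner (fun _ => F))
          (fun b => if b then s.1 else t.1) v)) := by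
  classical
  apply le_antisymm
  · refine le_trans (iInf_le _
      ⟨Stmt19Aux.minStrat A owner F, Stmt19Aux.minStrat_isStrategy A owner F⟩) ?_
    refine le_trans (iSup_le fun t =>
      Stmt19Aux.cost_outcome_le_rnk A owner F _ (if_pos rfl) ?_ v) ?_
    · show IsStrategy A (if (false : Bool) = true then _ else t.1)
      rw [if_neg (by simp)]
      exact t.2
    · refine le_trans ?_ (le_iSup _
        ⟨Stmt19Aux.maxStrat A owner F, Stmt19Aux.maxStrat_isStrategy A owner F⟩)
      refine le_iInf fun s =>
        Stmt19Aux.rnk_le_cost_outcome A owner F _ (if_neg (by simp)) ?_ v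
      show IsStrategy A (if (true : Bool) = true then s.1 else _)
      rw [if_pos rfl]
      exact s.2
  · exact iSup_iInf_le_iInf_iSup _
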